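/- For integers m, n with gcd(n, 3m) = 1, the cubic residue symbol (m/n)₃ in the Eisenstein integers equals 1. -/

import Mathlib

open Polynomial

noncomputable section

/-- The Eisenstein integers `ℤ[ω] = ℤ[X]/(X² + X + 1)`. -/
abbrev Eis : Type := AdjoinRoot (X ^ 2 + X + 1 : ℤ[X])

/-- The primitive cube root of unity `ω` in `ℤ[ω]`. -/
noncomputable def eisω : Eis := AdjoinRoot.root _

/-- The norm `ℤ[ω] → ℤ`. -/
noncomputable def eisNorm : Eis →* ℤ := Algebra.norm ℤ

/-- A cubic residue symbol `χ β α = (β/α)₃` on the Eisenstein integers: it is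
multiplicative in the denominator, equals `1` on unit denominators, and for an
Eisenstein prime `π ∤ 3` it is the unique value in `{1, ω, ω²}` congruent to
`β^{(N(π)-1)/3}` mod `π` (and `0` when `π ∣ β`). -/
structure IsCubicSymbol (χ : Eis → Eis → Eis) : Prop where
  prime_value : ∀ β π : Eis, Prime π → ¬ π ∣ 3 → ¬ π ∣ β →
    χ β π ∈ ({1, eisω, eisω ^ 2} : Set Eis) ∧
      π ∣ (χ β π - β ^ (((eisNorm π).natAbs - 1) / 3))
  prime_zero : ∀ β π : Eis, Prime π → ¬ π ∣ 3 → π ∣ β → χ β π = 0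
  unit_denom : ∀ β u : Eis, IsUnit u → χ β u = 1
  mul_denom : ∀ β π₁ π₂ : Eis, χ β (π₁ * π₂) = χ β π₁ * χ β π₂

namespace EisAux

local notation "K" => CyclotomicField 3 ℚ

instance : IsCyclotomicExtension {3} ℚ K := CyclotomicField.isCyclotomicExtension 3 ℚ

lemma hζ : IsPrimitiveRoot (IsCyclotomicExtension.zeta 3 ℚ K) (3 : ℕ) :=
  IsCyclotomicExtension.zeta_spec 3 ℚ K

lemma minpoly_zeta : minpoly ℤ (IsCyclotomicExtension.zeta 3 ℚ K) = X ^ 2 + X + 1 := by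
  refine (Polynomial.cyclotomic_eq_minpoly hζ (by norm_num)).symm.trans ?_
  norm_num [Polynomial.cyclotomic_three]

noncomputable def eisEquiv : Eis ≃ₐ[ℤ] NumberField.RingOfIntegers K :=
  (minpoly_zeta ▸ (minpoly.equivAdjoin (hζ.isIntegral (by norm_num)))).trans
    hζ.adjoinEquivRingOfIntegers

instance : IsDomain Eis :=
  Function.Injective.isDomain eisEquiv.toRingEquiv.toRingHom eisEquiv.injective

instance : CharZero Eis := eisEquiv.toRingEquiv.toRingHom.charZero

instance : IsPrincipalIdealRing Eis := by
  haveI : NumberField K := IsCyclotomicExtension.numberField {3} ℚ K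
  haveI := IsCyclotomicExtension.Rat.three_pid K
  exact IsPrincipalIdealRing.of_surjective eisEquiv.symm.toRingEquiv.toRingHom
    eisEquiv.symm.surjective

lemma hrel : eisω ^ 2 + eisω + 1 = 0 := by
  have h : (AdjoinRoot.mk (X ^ 2 + X + 1 : ℤ[X])) (X ^ 2 + X + 1) = 0 := AdjoinRoot.mk_self
  rw [map_add, map_add, map_pow, map_one, AdjoinRoot.mk_X] at h
  exact h

lemma cube : eisω ^ 3 = 1 := by linear_combination (eisω - 1) * hrel

lemma aux0 : (Polynomial.aeval (eisω ^ 2)) (X ^ 2 + X + 1 : ℤ[X]) = 0 := by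
  simp only [map_add, map_pow, map_one, Polynomial.aeval_X]
  linear_combination (eisω ^ 2 - eisω + 1) * hrel

noncomputable def conjHom : Eis →ₐ[ℤ] Eis := AdjoinRoot.liftAlgHom _ (Algebra.ofId ℤ Eis) (eisω ^ 2) aux0

lemma conj_root : conjHom eisω = eisω ^ 2 := AdjoinRoot.liftAlgHom_root _ _ _ aux0

lemma conj_conj (x : Eis) : conjHom (conjHom x) = x := by
  have h : conjHom.comp conjHom = AlgHom.id ℤ Eis := by
    apply AdjoinRoot.algHom_ext
    show conjHom (conjHom eisω) = eisω
    rw [conj_root, map_pow, conj_root, ← pow_mul]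
    calc eisω ^ (2 * 2) = eisω ^ 3 * eisω := by ring
    _ = eisω := by rw [cube, one_mul]
  calc conjHom (conjHom x) = (conjHom.comp conjHom) x := rfl
  _ = x := by rw [h]; rfl

noncomputable def conj : Eis ≃ₐ[ℤ] Eis :=
  AlgEquiv.ofAlgHom conjHom conjHom (AlgHom.ext conj_conj) (AlgHom.ext conj_conj)

lemma conj_ω : conj eisω = eisω ^ 2 := conj_root

lemma conj_ω2 : conj (eisω ^ 2) = eisω := by
  show conjHom (eisω ^ 2) = eisω
  rw [map_pow, conj_root, ← pow_mul]
  calc eisω ^ (2 * 2) = eisω ^ 3 * eisω := by ring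
  _ = eisω := by rw [cube, one_mul]

lemma norm_conj (x : Eis) : eisNorm (conj x) = eisNorm x :=
  Algebra.norm_eq_of_algEquiv conj x

lemma one_sub_ω_dvd : (1 - eisω) ∣ (3 : Eis) := ⟨2 + eisω, by linear_combination hrel⟩
lemma one_sub_ω2_dvd : (1 - eisω ^ 2) ∣ (3 : Eis) :=
  ⟨1 - eisω, by linear_combination (2 - eisω) * hrel⟩
lemma ω_sub_ω2_dvd : (eisω - eisω ^ 2) ∣ (3 : Eis) :=
  ⟨eisω ^ 2 - eisω, by linear_combination (eisω ^ 2 - 3 * eisω + 3) * hrel⟩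

lemma mem_cases {a : Eis} (ha : a ∈ ({1, eisω, eisω ^ 2} : Set Eis)) :
    a = 1 ∨ a = eisω ∨ a = eisω ^ 2 := by simpa using ha

lemma eq_of_dvd_sub {π a b : Eis} (h3 : ¬ π ∣ (3 : Eis))
    (ha : a ∈ ({1, eisω, eisω ^ 2} : Set Eis)) (hb : b ∈ ({1, eisω, eisω ^ 2} : Set Eis))
    (hd : π ∣ a - b) : a = b := by
  have key : ∀ d : Eis, d ∣ (3 : Eis) → π ∣ d ∨ π ∣ -d → False := by
    rintro d hd3 (hpd | hpd)
    · exact h3 (hpd.trans hd3)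
    · exact h3 ((dvd_neg.mp hpd).trans hd3)
  rcases mem_cases ha with rfl | rfl | rfl <;> rcases mem_cases hb with rfl | rfl | rfl
  · rfl
  · exact (key _ one_sub_ω_dvd (Or.inl hd)).elim
  · exact (key _ one_sub_ω2_dvd (Or.inl hd)).elim
  · exact (key _ one_sub_ω_dvd (Or.inr (by rw [neg_sub]; exact hd))).elim
  · rfl
  · exact (key _ ω_sub_ω2_dvd (Or.inl hd)).elim
  · exact (key _ one_sub_ω2_dvd (Or.inr (by rw [neg_sub]; exact hd))).elim
  · exact (key _ ω_sub_ω2_dvd (Or.inr (by rw [neg_sub]; exact hd))).elim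
  · rfl

lemma conj_mem {a : Eis} (ha : a ∈ ({1, eisω, eisω ^ 2} : Set Eis)) :
    conj a ∈ ({1, eisω, eisω ^ 2} : Set Eis) := by
  rcases mem_cases ha with rfl | rfl | rfl
  · simp only [map_one]; exact Set.mem_insert _ _
  · rw [conj_ω]; right; right; rfl
  · rw [conj_ω2]; right; left; rfl

lemma pair {χ : Eis → Eis → Eis} (hχ : IsCubicSymbol χ) (m : ℤ) {π : Eis} (hp : Prime π)
    (h3 : ¬ π ∣ (3 : Eis)) (hm : ¬ π ∣ (m : Eis)) :
    χ (m : Eis) π * χ (m : Eis) (conj π) = 1 := by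
  have hp' : Prime (conj π) := (MulEquiv.prime_iff conj).mpr hp
  have h3' : ¬ conj π ∣ (3 : Eis) := by
    intro hd
    have := map_dvd conj.symm hd
    rw [AlgEquiv.symm_apply_apply, map_ofNat] at this
    exact h3 this
  have hm' : ¬ conj π ∣ ((m : ℤ) : Eis) := by
    intro hd
    have := map_dvd conj.symm hd
    exact hm (by simpa using this)
  obtain ⟨hv1, hc1⟩ := hχ.prime_value (m : Eis) π hp h3 hm
  obtain ⟨hv2, hc2⟩ := hχ.prime_value (m : Eis) (conj π) hp' h3' hm'
  rw [norm_conj] at hc2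
  have hc1' : conj π ∣ conj (χ (m : Eis) π) - (m : Eis) ^ (((eisNorm π).natAbs - 1) / 3) := by
    have := map_dvd conj hc1
    simpa [map_sub, map_pow, map_intCast] using this
  have hd : conj π ∣ χ (m : Eis) (conj π) - conj (χ (m : Eis) π) := by
    have := dvd_sub hc2 hc1'
    simpa using this
  have heq : χ (m : Eis) (conj π) = conj (χ (m : Eis) π) :=
    eq_of_dvd_sub h3' hv2 (conj_mem hv1) hd
  rcases mem_cases hv1 with h | h | h <;> rw [heq, h]
  · rw [map_one, mul_one]
  · rw [conj_ω]; linear_combination cube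
  · rw [conj_ω2]; linear_combination cube

end EisAux

/-- For integers `m, n` with `gcd(n, 3m) = 1`, the cubic residue symbol `(m/n)₃`
in the Eisenstein integers equals `1`. -/
theorem stmt_10 (χ : Eis → Eis → Eis) (hχ : IsCubicSymbol χ) (m n : ℤ)
    (h : IsCoprime n (3 * m)) :
    χ (m : Eis) (n : Eis) = 1 := by
  have hn0 : (n : Eis) ≠ 0 := by
    have hn : n ≠ 0 := by
      rintro rfl
      have := isCoprime_zero_left.mp h
      rcases Int.isUnit_iff.mp this with h1 | h1 <;> omega
    exact_mod_cast hn
  have hcm : IsCoprime (n : Eis) ((m : ℤ) : Eis) := by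
    have := (h.of_isCoprime_of_dvd_right (dvd_mul_left m 3)).map (Int.castRingHom Eis)
    simpa using this
  have hc3 : IsCoprime (n : Eis) (3 : Eis) := by
    have := (h.of_isCoprime_of_dvd_right (dvd_mul_right 3 m)).map (Int.castRingHom Eis)
    simpa using this
  have key : ∀ α : Eis, α ∣ (n : Eis) →
      χ (m : Eis) α * χ (m : Eis) (EisAux.conj α) = 1 ∧
        ∃ k : ℕ, χ (m : Eis) α = eisω ^ k := by
    intro α
    refine UniqueFactorizationMonoid.induction_on_prime α ?_ ?_ ?_
    · intro h0
      exact absurd (zero_dvd_iff.mp h0) hn0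
    · intro u hu _
      refine ⟨?_, 0, ?_⟩
      · rw [hχ.unit_denom _ _ hu, hχ.unit_denom _ _ (hu.map EisAux.conj), one_mul]
      · rw [pow_zero, hχ.unit_denom _ _ hu]
    · intro a p ha hp ih hdvd
      have hpn : p ∣ (n : Eis) := (Dvd.intro a rfl).trans hdvd
      have han : a ∣ (n : Eis) := (Dvd.intro_left p rfl).trans hdvd
      obtain ⟨iha, k, ihk⟩ := ih han
      have h3 : ¬ p ∣ (3 : Eis) := fun hd => hp.not_unit (hc3.isUnit_of_dvd' hpn hd)
      have hm : ¬ p ∣ ((m : ℤ) : Eis) := fun hd => hp.not_unit (hcm.isUnit_of_dvd' hpn hd)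
      have hpair := EisAux.pair hχ m hp h3 hm
      constructor
      · rw [map_mul, hχ.mul_denom, hχ.mul_denom]
        calc χ (m : Eis) p * χ (m : Eis) a *
              (χ (m : Eis) (EisAux.conj p) * χ (m : Eis) (EisAux.conj a))
            = (χ (m : Eis) p * χ (m : Eis) (EisAux.conj p)) *
              (χ (m : Eis) a * χ (m : Eis) (EisAux.conj a)) := by ring
        _ = 1 := by rw [hpair, iha, one_mul]
      · obtain ⟨hv, -⟩ := hχ.prime_value (m : Eis) p hp h3 hm
        rcases EisAux.mem_cases hv with hc | hc | hc
        · exact ⟨k, by rw [hχ.mul_denom, hc, one_mul, ihk]⟩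
        · exact ⟨k + 1, by rw [hχ.mul_denom, hc, ihk]; ring⟩
        · exact ⟨k + 2, by rw [hχ.mul_denom, hc, ihk]; ring⟩
  obtain ⟨h1, k, hk⟩ := key (n : Eis) dvd_rfl
  have hconj : EisAux.conj ((n : ℤ) : Eis) = ((n : ℤ) : Eis) := map_intCast _ n
  rw [hconj] at h1
  have c3 : χ (m : Eis) (n : Eis) ^ 3 = 1 := by
    rw [hk, ← pow_mul, mul_comm, pow_mul, EisAux.cube, one_pow]
  calc χ (m : Eis) (n : Eis) = χ (m : Eis) (n : Eis) * (χ (m : Eis) (n : Eis) * χ (m : Eis) (n : Eis)) := by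
        rw [h1, mul_one]
  _ = χ (m : Eis) (n : Eis) ^ 3 := by ring
  _ = 1 := c3

end
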